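/- Let u be a symplectic transformation of E whose minimal polynomial is (X - c)^m with c = 1 or c = -1, let N = u - c·id, and let i be an odd integer with 1 ≤ i ≤ m. Then the K-dimension of the quotient space ker N^i / (ker N^{i-1} + (ker N^i ∩ range N)) is even (equivalently, the number of Jordan blocks of u of size i is even). -/

import Mathlib

open Polynomial

lemma aux_even_finrank {K V : Type*} [Field K] (hchar : (2 : K) ≠ 0)
    [AddCommGroup V] [Module K V] [FiniteDimensional K V]
    (f : LinearMap.BilinForm K V) (halt : f.IsAlt) (hnd : f.Nondegenerate) :
    Even (Module.finrank K V) := by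
  rcases Nat.even_or_odd (Module.finrank K V) with h | h
  · exact h
  · exfalso
    set b := Module.finBasis K V
    set M := LinearMap.BilinForm.toMatrix b f with hM
    have hdet : M.det ≠ 0 := (LinearMap.BilinForm.nondegenerate_iff_det_ne_zero b).mp hnd
    have hMT : M.transpose = -M := by
      ext i j
      simp only [Matrix.transpose_apply, Matrix.neg_apply, hM, LinearMap.BilinForm.toMatrix_apply]
      exact (LinearMap.IsAlt.neg halt (b i) (b j)).symm
    have := M.det_transpose
    rw [hMT, Matrix.det_neg, Fintype.card_fin, h.neg_one_pow, neg_one_mul] at this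
    have h2 : (2 : K) * M.det = 0 := by linear_combination -this
    rcases mul_eq_zero.mp h2 with h' | h'
    · exact hchar h'
    · exact hdet h'

set_option maxHeartbeats 1000000 in
/-- For a symplectic `u` with minimal polynomial `(X - c)^m` (`c = ±1`), setting
`N = u - c • id`, for every odd `i` with `1 ≤ i ≤ m` the dimension of
`ker N^i / (ker N^(i-1) + ker N^i ∩ range N)` is even. -/
theorem stmt_19 {K E : Type*} [Field K] (hchar : (2 : K) ≠ 0)
    [AddCommGroup E] [Module K E] [FiniteDimensional K E]
    (B : E →ₗ[K] E →ₗ[K] K) (halt : ∀ x, B x x = 0)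
    (hnd : ∀ x, (∀ y, B x y = 0) → x = 0)
    (u : E ≃ₗ[K] E) (hu : ∀ x y, B (u x) (u y) = B x y)
    (c : K) (hc : c = 1 ∨ c = -1) (m : ℕ)
    (hmin : minpoly K (u : Module.End K E) = (X - C c) ^ m)
    (N : Module.End K E) (hN : N = (u : Module.End K E) - c • (1 : Module.End K E))
    (i : ℕ) (hodd : Odd i) (hi1 : 1 ≤ i) (him : i ≤ m) :
    Even (Module.finrank K
      (LinearMap.ker (N ^ i) ⧸
        Submodule.comap (LinearMap.ker (N ^ i)).subtype
          (LinearMap.ker (N ^ (i - 1)) ⊔ (LinearMap.ker (N ^ i) ⊓ LinearMap.range N)))) := by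
  classical
  have hc2 : c * c = 1 := by rcases hc with rfl | rfl <;> ring
  have Bskew : ∀ x y, B x y = - B y x := by
    intro x y
    have h := halt (x + y)
    simp only [map_add, LinearMap.add_apply, halt x, halt y, zero_add, add_zero] at h
    linear_combination h
  set v : Module.End K E := (u.symm : Module.End K E) with hv
  have hNu : ∀ x, N x = u x - c • x := by
    intro x
    simp [hN, LinearMap.sub_apply, LinearMap.smul_apply, Module.End.one_apply]
  have hi1' : i - 1 + 1 = i := Nat.succ_pred_eq_of_pos hi1
  -- eigen lemma: on ker N, v acts by c
  have heig : ∀ z, N z = 0 → v z = c • z := by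
    intro z hz
    have h1 : u z = c • z := by
      have h := (hNu z).symm; rw [hz] at h
      rwa [sub_eq_zero] at h
    have h2 : z = c • v z := by
      have := congrArg u.symm h1
      simpa [map_smul, hv] using this
    calc v z = (c * c) • v z := by rw [hc2, one_smul]
    _ = c • (c • v z) := by rw [mul_smul]
    _ = c • z := by rw [← h2]
  have heigk : ∀ (k : ℕ) z, N z = 0 → (v ^ k) z = c ^ k • z := by
    intro k
    induction k with
    | zero => intro z _; simp
    | succ n ih =>
      intro z hz
      rw [pow_succ, Module.End.mul_apply, heig z hz, map_smul, ih z hz, smul_smul,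
        mul_comm, ← pow_succ]
  -- the adjoint of N
  set M : Module.End K E := (-c) • (v * N) with hM
  have adj1 : ∀ x y, B (N x) y = B x (M y) := by
    intro x y
    have h2 : u (M y) = y - c • (u y) := by
      have hMy : M y = (-c) • (u.symm (N y)) := rfl
      rw [hMy, map_smul, LinearEquiv.apply_symm_apply, hNu y, smul_sub, smul_smul, neg_mul,
        hc2]
      module
    calc B (N x) y = B (u x) y - c * B x y := by
          rw [hNu x, map_sub, LinearMap.sub_apply, map_smul, LinearMap.smul_apply, smul_eq_mul]
    _ = B (u x) y - c * B (u x) (u y) := by rw [hu]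
    _ = B (u x) (y - c • u y) := by rw [map_sub, map_smul, smul_eq_mul]
    _ = B (u x) (u (M y)) := by rw [h2]
    _ = B x (M y) := hu x (M y)
  have hcomm : v * N = N * v := by
    apply LinearMap.ext; intro x
    simp only [Module.End.mul_apply, hNu, hv, LinearEquiv.coe_coe, map_sub, map_smul,
      LinearEquiv.symm_apply_apply, LinearEquiv.apply_symm_apply]
  have hMk : ∀ k : ℕ, M ^ k = ((-c) ^ k) • ((v ^ k) * (N ^ k)) := by
    intro k
    rw [hM, _root_.smul_pow, (Commute.mul_pow hcomm k)]
  have adjk : ∀ (k : ℕ) x y, B ((N ^ k) x) y = B x ((M ^ k) y) := by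
    intro k
    induction k with
    | zero => intro x y; simp
    | succ n ih =>
      intro x y
      have h1 : (N ^ (n + 1)) x = (N ^ n) (N x) := by rw [pow_succ, Module.End.mul_apply]
      have h2 : (M ^ (n + 1)) y = M ((M ^ n) y) := by rw [pow_succ', Module.End.mul_apply]
      rw [h1, ih (N x) y, adj1, ← h2]
  have hM0 : ∀ y, (N ^ i) y = 0 → (M ^ i) y = 0 := by
    intro y hy
    rw [hMk, LinearMap.smul_apply, Module.End.mul_apply, hy, map_zero, smul_zero]
  have heven : Even (i - 1) := Nat.Odd.sub_odd hodd odd_one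
  have hscal : (-c) ^ (i - 1) * c ^ (i - 1) = 1 := by
    rw [← mul_pow]
    have h : (-c) * c = -(c * c) := by ring
    rw [h, hc2]
    exact heven.neg_one_pow
  have hNsplit : ∀ x, N ((N ^ (i - 1)) x) = (N ^ i) x := by
    intro x
    rw [← Module.End.mul_apply, ← pow_succ', hi1']
  have hNsplit2 : ∀ x, (N ^ (i - 1)) (N x) = (N ^ i) x := by
    intro x
    rw [← Module.End.mul_apply, ← pow_succ, hi1']
  have hMfix : ∀ y, (N ^ i) y = 0 → (M ^ (i - 1)) y = (N ^ (i - 1)) y := by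
    intro y hy
    have hz : N ((N ^ (i - 1)) y) = 0 := by rw [hNsplit, hy]
    rw [hMk, LinearMap.smul_apply, Module.End.mul_apply, heigk (i - 1) _ hz, smul_smul,
      hscal, one_smul]
  -- the key skew-symmetry identity on ker N^i
  have hSkey : ∀ x y : E, (N ^ i) y = 0 → B x ((N ^ (i - 1)) y) = - B y ((N ^ (i - 1)) x) := by
    intro x y hy
    rw [← hMfix y hy, ← adjk, ← Bskew]
  -- orthogonality: vectors orthogonal to ker N^i lie in range N^i
  have hOrth : ∀ w : E, (∀ y : E, (N ^ i) y = 0 → B y w = 0) →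
      w ∈ LinearMap.range (N ^ i) := by
    intro w hw
    have hflipnd : LinearMap.BilinForm.Nondegenerate (B.flip) := by
      refine ⟨fun w' hw' => ?_, fun w' hw' => hnd w' hw'⟩
      apply hnd w'
      intro y
      rw [Bskew]
      simpa using hw' y
    set ψ : E →ₗ[K] Module.Dual K (LinearMap.ker (N ^ i)) :=
      (LinearMap.ker (N ^ i)).subtype.dualMap ∘ₗ B.flip with hψ
    have hψapp : ∀ (w' : E) (y : LinearMap.ker (N ^ i)), ψ w' y = B (y : E) w' :=
      fun _ _ => rfl
    have hrange_le : LinearMap.range (N ^ i) ≤ LinearMap.ker ψ := by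
      rintro _ ⟨z, rfl⟩
      rw [LinearMap.mem_ker]
      apply LinearMap.ext
      intro y
      rw [LinearMap.zero_apply, hψapp, Bskew, adjk, hM0 _ y.2, map_zero, neg_zero]
    have hsurj : Function.Surjective ψ := by
      rw [hψ, LinearMap.coe_comp]
      apply Function.Surjective.comp
      · exact LinearMap.dualMap_surjective_of_injective (Submodule.injective_subtype _)
      · intro φ
        refine ⟨(LinearMap.BilinForm.toDual B.flip hflipnd).symm φ, ?_⟩
        apply LinearMap.ext
        intro n
        exact LinearMap.BilinForm.apply_toDual_symm_apply φ n
    have e1 := LinearMap.finrank_range_add_finrank_ker ψ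
    have e2 := LinearMap.finrank_range_add_finrank_ker (N ^ i)
    have e3 : Module.finrank K (Module.Dual K (LinearMap.ker (N ^ i))) =
        Module.finrank K (LinearMap.ker (N ^ i)) := Subspace.dual_finrank_eq
    have e4 : Module.finrank K (LinearMap.range ψ) =
        Module.finrank K (Module.Dual K (LinearMap.ker (N ^ i))) := by
      rw [LinearMap.range_eq_top.mpr hsurj]
      exact finrank_top K _
    have hle : Module.finrank K (LinearMap.ker ψ) ≤
        Module.finrank K (LinearMap.range (N ^ i)) := by omega
    have heq : LinearMap.range (N ^ i) = LinearMap.ker ψ :=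
      Submodule.eq_of_le_of_finrank_le hrange_le hle
    rw [heq, LinearMap.mem_ker]
    apply LinearMap.ext
    intro y
    rw [hψapp]
    exact hw (y : E) y.2
  -- now set up the quotient form
  set W := LinearMap.ker (N ^ i) with hW
  set S := LinearMap.ker (N ^ (i - 1)) ⊔ (LinearMap.ker (N ^ i) ⊓ LinearMap.range N) with hS
  set R := Submodule.comap W.subtype S with hR
  set f₀ : W →ₗ[K] W →ₗ[K] K :=
    B.compl₁₂ W.subtype ((N ^ (i - 1)) ∘ₗ W.subtype) with hf₀
  have hf₀app : ∀ x y : W, f₀ x y = B (x : E) ((N ^ (i - 1)) (y : E)) := fun _ _ => rfl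
  have hmemW : ∀ x : W, (N ^ i) (x : E) = 0 := fun x => x.2
  -- the form vanishes when the second argument is in S
  have hzero2 : ∀ (x : W) (y : E), y ∈ S → B (x : E) ((N ^ (i - 1)) y) = 0 := by
    intro x y hy
    rcases Submodule.mem_sup.mp hy with ⟨a, ha, b, hb, rfl⟩
    rcases Submodule.mem_inf.mp hb with ⟨hb1, z, rfl⟩
    have ha' : (N ^ (i - 1)) a = 0 := ha
    rw [map_add, map_add, ha', map_zero, zero_add, hNsplit2]
    have h1 : B ((N ^ i) z) (x : E) = 0 := by
      rw [adjk, hM0 _ (hmemW x), map_zero]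
    rw [Bskew, h1, neg_zero]
  -- the form vanishes when the first argument is in S
  have hzero1 : ∀ (x : W), (x : E) ∈ S → ∀ y : W, B (x : E) ((N ^ (i - 1)) (y : E)) = 0 := by
    intro x hx y
    rw [hSkey _ _ (hmemW y), hzero2 y (x : E) hx, neg_zero]
  -- descend the form to the quotient
  have hcond : ∀ x : W, R ≤ LinearMap.ker (f₀ x) := by
    intro x y hy
    rw [LinearMap.mem_ker, hf₀app]
    exact hzero2 x (y : E) (Submodule.mem_comap.mp hy)
  set A : W →ₗ[K] ((W ⧸ R) →ₗ[K] K) :=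
    { toFun := fun x => R.liftQ (f₀ x) (hcond x)
      map_add' := by
        intro x x'
        apply LinearMap.ext
        intro q
        obtain ⟨y, rfl⟩ := Submodule.Quotient.mk_surjective R q
        simp [Submodule.liftQ_apply]
      map_smul' := by
        intro a x
        apply LinearMap.ext
        intro q
        obtain ⟨y, rfl⟩ := Submodule.Quotient.mk_surjective R q
        simp [Submodule.liftQ_apply] } with hA
  have hAapp : ∀ (x y : W), A x (Submodule.Quotient.mk y) = f₀ x y := fun _ _ => rfl
  have hAcond : R ≤ LinearMap.ker A := by
    intro x hx
    rw [LinearMap.mem_ker]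
    apply LinearMap.ext
    intro q
    obtain ⟨y, rfl⟩ := Submodule.Quotient.mk_surjective R q
    rw [hAapp, hf₀app]
    simpa using hzero1 x (Submodule.mem_comap.mp hx) y
  set fbar : (W ⧸ R) →ₗ[K] (W ⧸ R) →ₗ[K] K := R.liftQ A hAcond with hfbar
  have hfbarapp : ∀ x y : W,
      fbar (Submodule.Quotient.mk x) (Submodule.Quotient.mk y) = f₀ x y := fun _ _ => rfl
  have halt' : fbar.IsAlt := by
    intro q
    obtain ⟨x, rfl⟩ := Submodule.Quotient.mk_surjective R q
    rw [hfbarapp, hf₀app]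
    have h := hSkey (x : E) (x : E) (hmemW x)
    have h2 : (2 : K) * B (x : E) ((N ^ (i - 1)) (x : E)) = 0 := by linear_combination h
    rcases mul_eq_zero.mp h2 with h' | h'
    · exact absurd h' hchar
    · exact h'
  have hnd' : LinearMap.BilinForm.Nondegenerate fbar := by
    refine (halt'.isRefl.nondegenerate_iff_separatingLeft).mpr ?_
    intro q hq
    obtain ⟨x, rfl⟩ := Submodule.Quotient.mk_surjective R q
    have hx : ∀ y : E, (N ^ i) y = 0 → B y ((N ^ (i - 1)) (x : E)) = 0 := by
      intro y hy
      have h1 := hq (Submodule.Quotient.mk ⟨y, hy⟩)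
      rw [hfbarapp, hf₀app] at h1
      have h2 := hSkey (x : E) y hy
      rw [h1] at h2
      linear_combination h2
    obtain ⟨z, hz⟩ := hOrth _ hx
    rw [Submodule.Quotient.mk_eq_zero]
    rw [hR, Submodule.mem_comap]
    rw [hS, Submodule.mem_sup]
    refine ⟨(x : E) - N z, ?_, N z, ?_, by abel⟩
    · rw [LinearMap.mem_ker, map_sub, hNsplit2, hz, sub_self]
    · rw [Submodule.mem_inf]
      constructor
      · rw [LinearMap.mem_ker]
        have : (N ^ i) (N z) = N ((N ^ i) z) := by
          rw [← Module.End.mul_apply, ← Module.End.mul_apply, ← pow_succ, ← pow_succ']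
        rw [this, hz, hNsplit, hmemW x]
      · exact ⟨z, rfl⟩
  exact aux_even_finrank hchar fbar halt' hnd'
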